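/- For every real x, x^4 expanded via the partition polynomial: p_4(a_1,a_2,a_3,a_4) - p_4(-b_1,-b_2,-b_3,-b_4) = x^4, where p_n(a_1,...,a_n) = Σ over (k_1,...,k_n) with k_1 + 2k_2 + ... + n·k_n = n of ((k_1+...+k_n-1)!·n / (k_1!·...·k_n!))·a_1^{k_1}·...·a_n^{k_n}, and a_k = {x^{:k}}, b_k = ⌊x^{:k}⌋. -/

import Mathlib

/-- Iterated floor product: `x^{:0} = 1`, `x^{:k} = x * ⌊x^{:(k-1)}⌋`. -/
noncomputable def iterFloorPow (x : ℝ) : ℕ → ℝ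
  | 0 => 1
  | k + 1 => x * ⌊iterFloorPow x k⌋

/-- `a_k = {x^{:k}}`. -/
noncomputable def aSeq (x : ℝ) (k : ℕ) : ℝ := Int.fract (iterFloorPow x k)

/-- `b_k = ⌊x^{:k}⌋` regarded as a real number. -/
noncomputable def bSeq (x : ℝ) (k : ℕ) : ℝ := (⌊iterFloorPow x k⌋ : ℝ)

/-- The partition polynomial
`p_n(a_1,…,a_n) = ∑_{k_1+2k_2+⋯+nk_n=n} ((k_1+⋯+k_n-1)!·n / (k_1!⋯k_n!)) a_1^{k_1}⋯a_n^{k_n}`,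
with one term for each partition of `n`.  The multiplicity function is indexed by `i : Fin n`,
with `k i` being the exponent `k_{i+1}` of `a_{i+1}`; the bound `k i ≤ n` is automatic from
the partition condition. -/
noncomputable def pPoly (n : ℕ) (a : ℕ → ℝ) : ℝ :=
  ∑ k ∈ (Fintype.piFinset fun _ : Fin n => Finset.range (n + 1)).filter
      (fun k => ∑ i : Fin n, (i.1 + 1) * k i = n),
    (((Nat.factorial ((∑ i : Fin n, k i) - 1) * n : ℕ) : ℝ)
        / ((∏ i : Fin n, Nat.factorial (k i) : ℕ) : ℝ))
      * ∏ i : Fin n, a (i.1 + 1) ^ k i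

lemma filter4 : (Fintype.piFinset fun _ : Fin 4 => Finset.range (4 + 1)).filter
      (fun k => ∑ i : Fin 4, (i.1 + 1) * k i = 4) =
    {![4,0,0,0], ![2,1,0,0], ![0,2,0,0], ![1,0,1,0], ![0,0,0,1]} := by decide

lemma pPoly_four (a : ℕ → ℝ) :
    pPoly 4 a = a 1^4 + 4*a 1^2*a 2 + 2*a 2^2 + 4*a 1*a 3 + 4*a 4 := by
  rw [pPoly, filter4]
  rw [show ({![4,0,0,0], ![2,1,0,0], ![0,2,0,0], ![1,0,1,0], ![0,0,0,1]} : Finset (Fin 4 → ℕ))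
      = insert ![4,0,0,0] (insert ![2,1,0,0] (insert ![0,2,0,0]
          (insert ![1,0,1,0] {![0,0,0,1]}))) from rfl]
  rw [Finset.sum_insert (by decide), Finset.sum_insert (by decide),
     Finset.sum_insert (by decide), Finset.sum_insert (by decide), Finset.sum_singleton]
  norm_num [show ((3:Fin 4):ℕ) = 3 from rfl, Fin.sum_univ_four, Fin.prod_univ_four,
    Nat.factorial, show ∀ a b c d : ℕ, ![a,b,c,d] 2 = c from fun _ _ _ _ => rfl,
    show ∀ a b c d : ℕ, ![a,b,c,d] 3 = d from fun _ _ _ _ => rfl]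
  ring

lemma aSeq_succ (x : ℝ) (k : ℕ) : aSeq x (k + 1) = x * bSeq x k - bSeq x (k + 1) := by
  rw [aSeq, Int.fract]
  rfl

theorem fourth_power_partition_polynomial (x : ℝ) :
    pPoly 4 (aSeq x) - pPoly 4 (fun k => -(bSeq x k)) = x ^ 4 := by
  rw [pPoly_four, pPoly_four]
  have hb0 : bSeq x 0 = 1 := by
    simp [bSeq, iterFloorPow]
  have h1 := aSeq_succ x 0
  have h2 := aSeq_succ x 1
  have h3 := aSeq_succ x 2
  have h4 := aSeq_succ x 3
  rw [hb0, mul_one] at h1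
  rw [h1, h2, h3, h4]
  ring
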